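/- Let η = (K1, K2, K3, K4, κ3, κ6, κ9, κ12) be a tuple of positive real parameters with a(η) > 0 and b(η) < 0. If −b(η) ≤ 4·(K1·K4·κ6·κ9·a(η))^{1/2} + 2·(K2·K3·κ3·κ12·a(η))^{1/2} + 3·(K1·K2·K3·K4·κ3·κ6^2·κ9^2·κ12)^{1/3}·(K2^{−1}·(K2·K4)^{1/3} + K3^{−1}·(K1·K3)^{1/3}), then p_η(x1,x2,x3) > 0 for all x1 > 0, x2 > 0, x3 > 0. -/

import Mathlib

/-- The trivariate polynomial `p_η` governing monostationarity of dual phosphorylation. -/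
def pEta (K1 K2 K3 K4 κ3 κ6 κ9 κ12 x1 x2 x3 : ℝ) : ℝ :=
  K2 * κ3 * (κ3 * κ12 - κ6 * κ9) *
      (K2 * K4 * κ3 * κ9 * x1 ^ 4 * x3 ^ 2
        + K1 * K3 * κ6 * κ12 *
            (x1 ^ 3 * x2 ^ 2 * x3 + x1 ^ 2 * x2 ^ 3 * x3 + x1 ^ 2 * x2 ^ 2 * x3 ^ 2)
        + K2 * K3 * κ3 * κ12 * x1 ^ 3 * x2 * x3 ^ 2)
    + K1 * K2 * K3 * κ3 * κ6 * κ12 * ((K2 + K3) * κ3 * κ12 - (K1 + K4) * κ6 * κ9)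
        * x1 ^ 2 * x2 ^ 2 * x3
    + K1 * κ6 *
        (K2 ^ 2 * K4 * κ3 ^ 2 * κ9 ^ 2 * x1 ^ 4 * x3
          + 2 * K2 * K3 * K4 * κ3 ^ 2 * κ9 * κ12 * x1 ^ 3 * x2 * x3
          + K1 * K2 * K3 * κ3 * κ6 * κ12 * (κ9 + κ12) * x1 ^ 2 * x2 ^ 3
          + K1 * K2 * K3 * K4 * κ3 * κ6 * κ9 * κ12 * x1 ^ 2 * x2 ^ 2
          + K1 * K3 ^ 2 * κ6 * κ12 ^ 2 * (κ3 + κ6) * x1 * x2 ^ 4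
          + 2 * K1 * K2 * K3 * κ3 * κ6 * κ12 ^ 2 * x1 * x2 ^ 3 * x3
          + K1 * K2 * K3 ^ 2 * κ3 * κ6 * κ12 ^ 2 * x1 * x2 ^ 3
          + K1 * K3 ^ 2 * κ6 ^ 2 * κ12 ^ 2 * x2 ^ 4 * x3
          + K1 ^ 2 * K3 ^ 2 * κ6 ^ 2 * κ12 ^ 2 * x2 ^ 4)

/-- Two-term AM–GM: if `D ^ 2 = P * Q` with everything nonnegative, then `2 * D ≤ P + Q`. -/
lemma amgm_pair (P Q D : ℝ) (hP : 0 ≤ P) (hQ : 0 ≤ Q) (hD : 0 ≤ D)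
    (h : D ^ 2 = P * Q) : 2 * D ≤ P + Q := by
  have hDs : D = Real.sqrt P * Real.sqrt Q := by
    rw [← Real.sqrt_mul hP, ← h, Real.sqrt_sq hD]
  nlinarith [sq_nonneg (Real.sqrt P - Real.sqrt Q), Real.sq_sqrt hP, Real.sq_sqrt hQ]

/-- Three-term AM–GM: if `D ^ 3 = P ^ 2 * Q` with everything nonnegative,
then `3 * D ≤ 2 * P + Q`. -/
lemma amgm_triple (P Q D : ℝ) (hP : 0 ≤ P) (hQ : 0 ≤ Q) (hD : 0 ≤ D)
    (h : D ^ 3 = P ^ 2 * Q) : 3 * D ≤ 2 * P + Q := by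
  rcases hP.eq_or_lt with h0 | h0
  · have hD3 : D ^ 3 = 0 := by rw [h, ← h0]; ring
    have hD0 : D = 0 := by
      have := pow_eq_zero_iff (n := 3) (by norm_num) |>.mp hD3
      exact this
    rw [hD0, ← h0]; linarith
  · nlinarith [mul_nonneg (sq_nonneg (P - D)) (by linarith : (0:ℝ) ≤ 2 * P + D),
      mul_pos h0 h0]

lemma rpow_half_sq (X : ℝ) (hX : 0 ≤ X) : (X ^ ((1 : ℝ) / 2)) ^ 2 = X := by
  rw [← Real.rpow_natCast (X ^ ((1 : ℝ) / 2)) 2, ← Real.rpow_mul hX]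
  norm_num

lemma rpow_third_cube (X : ℝ) (hX : 0 ≤ X) : (X ^ ((1 : ℝ) / 3)) ^ 3 = X := by
  rw [← Real.rpow_natCast (X ^ ((1 : ℝ) / 3)) 3, ← Real.rpow_mul hX]
  norm_num

/-- The sufficient condition coming from pure cover `CC(15)` implies
positivity of the trivariate polynomial `p_η` on the positive orthant. -/
theorem pEta_pos_of_cover15
    (K1 K2 K3 K4 κ3 κ6 κ9 κ12 : ℝ)
    (hK1 : 0 < K1) (hK2 : 0 < K2) (hK3 : 0 < K3) (hK4 : 0 < K4)
    (hκ3 : 0 < κ3) (hκ6 : 0 < κ6) (hκ9 : 0 < κ9) (hκ12 : 0 < κ12)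
    (ha : 0 < κ3 * κ12 - κ6 * κ9)
    (hb : (K2 + K3) * κ3 * κ12 - (K1 + K4) * κ6 * κ9 < 0)
    (hcond : -((K2 + K3) * κ3 * κ12 - (K1 + K4) * κ6 * κ9) ≤
      4 * (K1 * K4 * κ6 * κ9 * (κ3 * κ12 - κ6 * κ9)) ^ ((1 : ℝ) / 2)
        + 2 * (K2 * K3 * κ3 * κ12 * (κ3 * κ12 - κ6 * κ9)) ^ ((1 : ℝ) / 2)
        + 3 * (K1 * K2 * K3 * K4 * κ3 * κ6 ^ 2 * κ9 ^ 2 * κ12) ^ ((1 : ℝ) / 3)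
            * (K2⁻¹ * (K2 * K4) ^ ((1 : ℝ) / 3) + K3⁻¹ * (K1 * K3) ^ ((1 : ℝ) / 3))) :
    ∀ x1 x2 x3 : ℝ, 0 < x1 → 0 < x2 → 0 < x3 →
      0 < pEta K1 K2 K3 K4 κ3 κ6 κ9 κ12 x1 x2 x3 := by
  intro x1 x2 x3 hx1 hx2 hx3
  set a := κ3 * κ12 - κ6 * κ9 with ha_def
  set C := K1 * K2 * K3 * κ3 * κ6 * κ12 with hC_def
  set m := x1 ^ 2 * x2 ^ 2 * x3 with hm_def
  set s1 := (K1 * K4 * κ6 * κ9 * a) ^ ((1 : ℝ) / 2) with hs1_def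
  set s2 := (K2 * K3 * κ3 * κ12 * a) ^ ((1 : ℝ) / 2) with hs2_def
  set t := (K1 * K2 * K3 * K4 * κ3 * κ6 ^ 2 * κ9 ^ 2 * κ12) ^ ((1 : ℝ) / 3) with ht_def
  set u := (K2 * K4) ^ ((1 : ℝ) / 3) with hu_def
  set v := (K1 * K3) ^ ((1 : ℝ) / 3) with hv_def
  have hs1sq : s1 ^ 2 = K1 * K4 * κ6 * κ9 * a := rpow_half_sq _ (by positivity)
  have hs2sq : s2 ^ 2 = K2 * K3 * κ3 * κ12 * a := rpow_half_sq _ (by positivity)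
  have htc : t ^ 3 = K1 * K2 * K3 * K4 * κ3 * κ6 ^ 2 * κ9 ^ 2 * κ12 :=
    rpow_third_cube _ (by positivity)
  have huc : u ^ 3 = K2 * K4 := rpow_third_cube _ (by positivity)
  have hvc : v ^ 3 = K1 * K3 := rpow_third_cube _ (by positivity)
  have hs1n : 0 ≤ s1 := by positivity
  have hs2n : 0 ≤ s2 := by positivity
  have htn : 0 ≤ t := by positivity
  have hun : 0 ≤ u := by positivity
  have hvn : 0 ≤ v := by positivity
  -- the positive monomial terms of pEta used in the cover
  have h1 : 2 * (C * s1 * m) ≤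
      K2 * κ3 * a * (K2 * K4 * κ3 * κ9) * (x1 ^ 4 * x3 ^ 2)
        + K1 * κ6 * (K1 ^ 2 * K3 ^ 2 * κ6 ^ 2 * κ12 ^ 2) * x2 ^ 4 := by
    apply amgm_pair _ _ _ (by positivity) (by positivity) (by positivity)
    have : (C * s1 * m) ^ 2 = C ^ 2 * m ^ 2 * s1 ^ 2 := by ring
    rw [this, hs1sq, hC_def, hm_def, ha_def]; ring
  have h2 : 2 * (C * s1 * m) ≤
      K2 * κ3 * a * (K1 * K3 * κ6 * κ12) * (x1 ^ 2 * x2 ^ 2 * x3 ^ 2)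
        + K1 * κ6 * (K1 * K2 * K3 * K4 * κ3 * κ6 * κ9 * κ12) * (x1 ^ 2 * x2 ^ 2) := by
    apply amgm_pair _ _ _ (by positivity) (by positivity) (by positivity)
    have : (C * s1 * m) ^ 2 = C ^ 2 * m ^ 2 * s1 ^ 2 := by ring
    rw [this, hs1sq, hC_def, hm_def, ha_def]; ring
  have h3 : 2 * (C * s2 * m) ≤
      K2 * κ3 * a * (K2 * K3 * κ3 * κ12) * (x1 ^ 3 * x2 * x3 ^ 2)
        + K1 * κ6 * (K1 * K2 * K3 ^ 2 * κ3 * κ6 * κ12 ^ 2) * (x1 * x2 ^ 3) := by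
    apply amgm_pair _ _ _ (by positivity) (by positivity) (by positivity)
    have : (C * s2 * m) ^ 2 = C ^ 2 * m ^ 2 * s2 ^ 2 := by ring
    rw [this, hs2sq, hC_def, hm_def, ha_def]; ring
  have h4 : 3 * (C * (t * (K2⁻¹ * u)) * m) ≤
      2 * (K1 * κ6 * (K2 * K3 * K4 * κ3 ^ 2 * κ9 * κ12) * (x1 ^ 3 * x2 * x3))
        + K1 * κ6 * (K1 * K3 ^ 2 * κ6 ^ 2 * κ12 ^ 2) * (x2 ^ 4 * x3) := by
    apply amgm_triple _ _ _ (by positivity) (by positivity) (by positivity)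
    have : (C * (t * (K2⁻¹ * u)) * m) ^ 3
        = C ^ 3 * m ^ 3 * (K2⁻¹) ^ 3 * (t ^ 3 * u ^ 3) := by ring
    rw [this, htc, huc, hC_def, hm_def]
    field_simp
  have h5 : 3 * (C * (t * (K3⁻¹ * v)) * m) ≤
      2 * (K1 * κ6 * (K1 * K2 * K3 * κ3 * κ6 * κ12 ^ 2) * (x1 * x2 ^ 3 * x3))
        + K1 * κ6 * (K2 ^ 2 * K4 * κ3 ^ 2 * κ9 ^ 2) * (x1 ^ 4 * x3) := by
    apply amgm_triple _ _ _ (by positivity) (by positivity) (by positivity)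
    have : (C * (t * (K3⁻¹ * v)) * m) ^ 3
        = C ^ 3 * m ^ 3 * (K3⁻¹) ^ 3 * (t ^ 3 * v ^ 3) := by ring
    rw [this, htc, hvc, hC_def, hm_def]
    field_simp
  -- multiply hcond by the positive quantity C * m
  have hCm : 0 < C * m := by positivity
  have hmul : C * m * (-((K2 + K3) * κ3 * κ12 - (K1 + K4) * κ6 * κ9)) ≤
      C * m * (4 * s1 + 2 * s2 + 3 * t * (K2⁻¹ * u + K3⁻¹ * v)) := by
    apply mul_le_mul_of_nonneg_left _ hCm.le
    exact hcond
  -- strictly positive leftover term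
  have hT2 : 0 < K2 * κ3 * a * (K1 * K3 * κ6 * κ12) * (x1 ^ 3 * x2 ^ 2 * x3) := by
    positivity
  have hT3 : 0 ≤ K2 * κ3 * a * (K1 * K3 * κ6 * κ12) * (x1 ^ 2 * x2 ^ 3 * x3) := by
    positivity
  have hU3 : 0 ≤ K1 * κ6 * (K1 * K2 * K3 * κ3 * κ6 * κ12 * (κ9 + κ12)) * (x1 ^ 2 * x2 ^ 3) := by
    positivity
  have hU5 : 0 ≤ K1 * κ6 * (K1 * K3 ^ 2 * κ6 * κ12 ^ 2 * (κ3 + κ6)) * (x1 * x2 ^ 4) := by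
    positivity
  have hsplit : pEta K1 K2 K3 K4 κ3 κ6 κ9 κ12 x1 x2 x3 =
      (K2 * κ3 * a * (K2 * K4 * κ3 * κ9) * (x1 ^ 4 * x3 ^ 2)
        + K1 * κ6 * (K1 ^ 2 * K3 ^ 2 * κ6 ^ 2 * κ12 ^ 2) * x2 ^ 4)
      + (K2 * κ3 * a * (K1 * K3 * κ6 * κ12) * (x1 ^ 2 * x2 ^ 2 * x3 ^ 2)
        + K1 * κ6 * (K1 * K2 * K3 * K4 * κ3 * κ6 * κ9 * κ12) * (x1 ^ 2 * x2 ^ 2))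
      + (K2 * κ3 * a * (K2 * K3 * κ3 * κ12) * (x1 ^ 3 * x2 * x3 ^ 2)
        + K1 * κ6 * (K1 * K2 * K3 ^ 2 * κ3 * κ6 * κ12 ^ 2) * (x1 * x2 ^ 3))
      + (2 * (K1 * κ6 * (K2 * K3 * K4 * κ3 ^ 2 * κ9 * κ12) * (x1 ^ 3 * x2 * x3))
        + K1 * κ6 * (K1 * K3 ^ 2 * κ6 ^ 2 * κ12 ^ 2) * (x2 ^ 4 * x3))
      + (2 * (K1 * κ6 * (K1 * K2 * K3 * κ3 * κ6 * κ12 ^ 2) * (x1 * x2 ^ 3 * x3))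
        + K1 * κ6 * (K2 ^ 2 * K4 * κ3 ^ 2 * κ9 ^ 2) * (x1 ^ 4 * x3))
      + K2 * κ3 * a * (K1 * K3 * κ6 * κ12) * (x1 ^ 3 * x2 ^ 2 * x3)
      + K2 * κ3 * a * (K1 * K3 * κ6 * κ12) * (x1 ^ 2 * x2 ^ 3 * x3)
      + K1 * κ6 * (K1 * K2 * K3 * κ3 * κ6 * κ12 * (κ9 + κ12)) * (x1 ^ 2 * x2 ^ 3)
      + K1 * κ6 * (K1 * K3 ^ 2 * κ6 * κ12 ^ 2 * (κ3 + κ6)) * (x1 * x2 ^ 4)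
      + C * ((K2 + K3) * κ3 * κ12 - (K1 + K4) * κ6 * κ9) * m := by
    unfold pEta
    rw [hC_def, hm_def, ha_def]; ring
  have hR : C * m * (4 * s1 + 2 * s2 + 3 * t * (K2⁻¹ * u + K3⁻¹ * v)) =
      2 * (C * s1 * m) + 2 * (C * s1 * m) + 2 * (C * s2 * m)
        + 3 * (C * (t * (K2⁻¹ * u)) * m) + 3 * (C * (t * (K3⁻¹ * v)) * m) := by
    ring
  rw [hsplit]
  have hbm : C * m * (-((K2 + K3) * κ3 * κ12 - (K1 + K4) * κ6 * κ9)) =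
      -(C * ((K2 + K3) * κ3 * κ12 - (K1 + K4) * κ6 * κ9) * m) := by ring
  linarith [hmul, h1, h2, h3, h4, h5]
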